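/- Fix an integer n ≥ 2 and set ρ = −n/2. Regard n, 𝔴, m_Φ and the lower-order coefficients f_{1,j}, f_{2,j}, f_{3,j} with 1 ≤ j ≤ n−1 as fixed. Then there exist polynomials P₀, P₁, P₂ ∈ ℂ[k] with deg P₁ ≤ 2 and deg P₂ ≤ 2, and a constant c ∈ ℂ, all depending only on n, 𝔴, m_Φ and the coefficients f_{a,j} with j ≤ n−1 (a = 1,2,3), such that for every choice of f_{1,n}, f_{2,n}, f_{3,n}, f_{1,n+1}, f_{2,n+1}, f_{3,n+1} ∈ ℂ one has det 𝓜⁽ⁿ⁾(−n/2) = f_{1,n}·P₁ + f_{2,n}·P₂ + c·f_{3,n}·k + P₀. In particular, det 𝓜⁽ⁿ⁾(−n/2) is an affine function of (f_{1,n}, f_{2,n}, f_{3,n}), is independent of f_{1,n+1}, f_{2,n+1}, f_{3,n+1}, the coefficient f_{3,n} occurs only in the coefficient of k¹ of the determinant, and f_{1,n}, f_{2,n} occur only in the coefficients of k⁰, k¹, k² of the determinant. -/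

import Mathlib

open Polynomial

/-- `A_m = Σ_{i=1}^{m-1} f_{1,i} f_{2,m-i}` (vanishing for `m < 2`). -/
noncomputable def Acoef (f1 f2 : ℕ → ℂ) (m : ℤ) : ℂ :=
  ∑ i ∈ Finset.Ico 1 m.toNat, f1 i * f2 (m.toNat - i)

/-- `B_m = ((m+1)/2)·A_{m+1} - Σ_{j=2}^m (-1)^{m-j} A_j` for `m ≥ 1`, and `0` otherwise. -/
noncomputable def Bcoef (f1 f2 : ℕ → ℂ) (m : ℤ) : ℂ :=
  if 1 ≤ m then
    ((m : ℂ) + 1) / 2 * Acoef f1 f2 (m + 1)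
      - ∑ j ∈ Finset.Icc 2 m.toNat, (-1 : ℂ) ^ (m.toNat - j) * Acoef f1 f2 (j : ℤ)
  else 0

/-- `C_0 = 𝔴²`; for `m ≥ 1`,
`C_m = -2𝔴 f_{3,m}·k + (Σ_{i=1}^{m-1} f_{3,i} f_{3,m-i} - f_{1,m})·k²
      - m_Φ²·Σ_{j=1}^m (-1)^{m-j}(m-j+1) f_{1,j}`; and `C_m = 0` for `m < 0`. -/
noncomputable def Ccoef (f1 f3 : ℕ → ℂ) (w mPhi : ℂ) (m : ℤ) : Polynomial ℂ :=
  if m = 0 then Polynomial.C (w ^ 2)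
  else if 1 ≤ m then
    Polynomial.C (-2 * w * f3 m.toNat) * Polynomial.X
      + Polynomial.C ((∑ i ∈ Finset.Ico 1 m.toNat, f3 i * f3 (m.toNat - i)) - f1 m.toNat)
          * Polynomial.X ^ 2
      - Polynomial.C (mPhi ^ 2 *
          ∑ j ∈ Finset.Icc 1 m.toNat, (-1 : ℂ) ^ (m.toNat - j) * ((m.toNat - j + 1 : ℕ) : ℂ) * f1 j)
  else 0

/-- The (1-based) `(K,S)` entry
`M_{KS} = A_{K-S+3}·(ρ+S-1)(ρ+S-2) + B_{K-S+2}·(ρ+S-1) + C_{K-S+1}`. -/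
noncomputable def Ment (f1 f2 f3 : ℕ → ℂ) (w mPhi ρ : ℂ) (K S : ℕ) : Polynomial ℂ :=
  Polynomial.C (Acoef f1 f2 ((K : ℤ) - (S : ℤ) + 3) * ((ρ + (S : ℂ) - 1) * (ρ + (S : ℂ) - 2)))
    + Polynomial.C (Bcoef f1 f2 ((K : ℤ) - (S : ℤ) + 2) * (ρ + (S : ℂ) - 1))
    + Ccoef f1 f3 w mPhi ((K : ℤ) - (S : ℤ) + 1)

/-- The near-horizon Frobenius matrix `𝓜⁽ⁿ⁾(ρ)` (entries indexed 1-based in the paper). -/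
noncomputable def Mmat (f1 f2 f3 : ℕ → ℂ) (w mPhi : ℂ) (n : ℕ) (ρ : ℂ) :
    Matrix (Fin n) (Fin n) (Polynomial ℂ) :=
  fun K S => Ment f1 f2 f3 w mPhi ρ (K.1 + 1) (S.1 + 1)


section helpers

variable {n : ℕ} (f1 f2 f3 h1 h2 h3 : ℕ → ℂ) (w mPhi ρ : ℂ)

/-- entries vanish two above the diagonal -/
lemma Ment_zero {K S : ℕ} (h : (K:ℤ) + 2 ≤ S) : Ment f1 f2 f3 w mPhi ρ K S = 0 := by
  unfold Ment
  have hA : Acoef f1 f2 ((K : ℤ) - S + 3) = 0 := by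
    unfold Acoef
    have : ((K : ℤ) - S + 3).toNat ≤ 1 := by omega
    rw [Finset.Ico_eq_empty (by omega), Finset.sum_empty]
  have hB : Bcoef f1 f2 ((K : ℤ) - S + 2) = 0 := by
    unfold Bcoef; rw [if_neg (by omega)]
  have hC : Ccoef f1 f3 w mPhi ((K : ℤ) - S + 1) = 0 := by
    unfold Ccoef; rw [if_neg (by omega), if_neg (by omega)]
  rw [hA, hB, hC]; simp

/-- entries strictly above the diagonal are constants -/
lemma Ment_const {K S : ℕ} (h : (K:ℤ) + 1 ≤ S) : ∃ a : ℂ, Ment f1 f2 f3 w mPhi ρ K S = Polynomial.C a := by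
  rcases eq_or_lt_of_le h with heq | hlt
  · refine ⟨Acoef f1 f2 ((K : ℤ) - S + 3) * ((ρ + (S:ℂ) - 1) * (ρ + (S:ℂ) - 2))
      + Bcoef f1 f2 ((K : ℤ) - S + 2) * (ρ + (S:ℂ) - 1) + w ^ 2, ?_⟩
    unfold Ment
    have hC : Ccoef f1 f3 w mPhi ((K : ℤ) - S + 1) = Polynomial.C (w ^ 2) := by
      unfold Ccoef; rw [if_pos (by omega)]
    rw [hC]; simp [map_add]
  · exact ⟨0, by rw [Ment_zero f1 f2 f3 w mPhi ρ (by omega)]; simp⟩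

/-- entries have degree at most 2 -/
lemma Ment_deg (K S : ℕ) : (Ment f1 f2 f3 w mPhi ρ K S).degree ≤ 2 := by
  unfold Ment
  refine le_trans (degree_add_le _ _) (max_le (le_trans (degree_add_le _ _) (max_le ?_ ?_)) ?_)
  · exact le_trans degree_C_le (by norm_num)
  · exact le_trans degree_C_le (by norm_num)
  · unfold Ccoef
    split_ifs
    · exact le_trans degree_C_le (by norm_num)
    · refine le_trans (degree_sub_le _ _) (max_le (le_trans (degree_add_le _ _) (max_le ?_ ?_)) ?_)
      · refine le_trans (degree_mul_le _ _) ?_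
        calc degree (Polynomial.C _) + degree X ≤ 0 + 1 := add_le_add degree_C_le degree_X_le
        _ ≤ 2 := by norm_num
      · refine le_trans (degree_mul_le _ _) ?_
        calc degree (Polynomial.C _) + degree (X^2) ≤ 0 + 2 := add_le_add degree_C_le (degree_X_pow_le 2)
        _ ≤ 2 := by norm_num
      · exact le_trans degree_C_le (by norm_num)
    · simp

end helpers

section agree

variable {n : ℕ} {f1 f2 f3 h1 h2 h3 : ℕ → ℂ}

lemma Acoef_agree (hag1 : ∀ j, 1 ≤ j → j ≤ n - 1 → f1 j = h1 j)
    (hag2 : ∀ j, 1 ≤ j → j ≤ n - 1 → f2 j = h2 j) {m : ℤ} (hm : m ≤ n) :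
    Acoef f1 f2 m = Acoef h1 h2 m := by
  unfold Acoef
  refine Finset.sum_congr rfl fun i hi => ?_
  rw [Finset.mem_Ico] at hi
  have htn : m.toNat ≤ n := by omega
  rw [hag1 i (by omega) (by omega), hag2 (m.toNat - i) (by omega) (by omega)]

lemma Acoef_top (hn : 2 ≤ n)
    (hag1 : ∀ j, 1 ≤ j → j ≤ n - 1 → f1 j = h1 j)
    (hag2 : ∀ j, 1 ≤ j → j ≤ n - 1 → f2 j = h2 j)
    (hz1 : h1 n = 0) (hz2 : h2 n = 0) :
    Acoef f1 f2 ((n:ℤ) + 1)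
      = Acoef h1 h2 ((n:ℤ) + 1) + f1 n * h2 1 + h1 1 * f2 n := by
  unfold Acoef
  have ht : ((n:ℤ) + 1).toNat = n + 1 := by omega
  rw [ht]
  rw [Finset.sum_Ico_succ_top (by omega), Finset.sum_Ico_succ_top (by omega),
      Finset.sum_eq_sum_Ico_succ_bot (by omega : 1 < n),
      Finset.sum_eq_sum_Ico_succ_bot (by omega : 1 < n)]
  have hmid : ∑ i ∈ Finset.Ico 2 n, f1 i * f2 (n + 1 - i)
      = ∑ i ∈ Finset.Ico 2 n, h1 i * h2 (n + 1 - i) := by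
    refine Finset.sum_congr rfl fun i hi => ?_
    rw [Finset.mem_Ico] at hi
    rw [hag1 i (by omega) (by omega), hag2 (n + 1 - i) (by omega) (by omega)]
  have e1 : n + 1 - n = 1 := by omega
  have e2 : n + 1 - 1 = n := by omega
  rw [hmid, e1, e2, hag1 1 le_rfl (by omega), hag2 1 le_rfl (by omega), hz1, hz2]
  ring

lemma Bcoef_agree (hag1 : ∀ j, 1 ≤ j → j ≤ n - 1 → f1 j = h1 j)
    (hag2 : ∀ j, 1 ≤ j → j ≤ n - 1 → f2 j = h2 j) {m : ℤ} (hm : m ≤ (n:ℤ) - 1) :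
    Bcoef f1 f2 m = Bcoef h1 h2 m := by
  unfold Bcoef
  split_ifs with h
  · rw [Acoef_agree hag1 hag2 (by omega : m + 1 ≤ (n:ℤ))]
    congr 1
    refine Finset.sum_congr rfl fun j hj => ?_
    rw [Finset.mem_Icc] at hj
    rw [Acoef_agree hag1 hag2 (show (j:ℤ) ≤ n by omega)]
  · rfl

lemma Bcoef_top (hn : 2 ≤ n)
    (hag1 : ∀ j, 1 ≤ j → j ≤ n - 1 → f1 j = h1 j)
    (hag2 : ∀ j, 1 ≤ j → j ≤ n - 1 → f2 j = h2 j)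
    (hz1 : h1 n = 0) (hz2 : h2 n = 0) :
    Bcoef f1 f2 (n:ℤ) = Bcoef h1 h2 (n:ℤ)
      + ((n:ℂ) + 1) / 2 * (f1 n * h2 1 + h1 1 * f2 n) := by
  unfold Bcoef
  rw [if_pos (by omega : (1:ℤ) ≤ (n:ℤ)), if_pos (by omega : (1:ℤ) ≤ (n:ℤ))]
  have ht : ((n:ℤ)).toNat = n := by omega
  rw [ht]
  have hsum : ∑ j ∈ Finset.Icc 2 n, (-1:ℂ)^(n - j) * Acoef f1 f2 (j:ℤ)
      = ∑ j ∈ Finset.Icc 2 n, (-1:ℂ)^(n - j) * Acoef h1 h2 (j:ℤ) := by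
    refine Finset.sum_congr rfl fun j hj => ?_
    rw [Finset.mem_Icc] at hj
    rw [Acoef_agree hag1 hag2 (show (j:ℤ) ≤ n by omega)]
  rw [hsum, Acoef_top hn hag1 hag2 hz1 hz2]
  push_cast
  ring

lemma Ccoef_agree (hag1 : ∀ j, 1 ≤ j → j ≤ n - 1 → f1 j = h1 j)
    (hag3 : ∀ j, 1 ≤ j → j ≤ n - 1 → f3 j = h3 j) {m : ℤ} (hm : m ≤ (n:ℤ) - 1)
    (w mPhi : ℂ) :
    Ccoef f1 f3 w mPhi m = Ccoef h1 h3 w mPhi m := by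
  unfold Ccoef
  split_ifs with h0 h1'
  · rfl
  · have e1 : f3 m.toNat = h3 m.toNat := hag3 _ (by omega) (by omega)
    have e2 : f1 m.toNat = h1 m.toNat := hag1 _ (by omega) (by omega)
    have e3 : (∑ i ∈ Finset.Ico 1 m.toNat, f3 i * f3 (m.toNat - i))
        = ∑ i ∈ Finset.Ico 1 m.toNat, h3 i * h3 (m.toNat - i) := by
      refine Finset.sum_congr rfl fun i hi => ?_
      rw [Finset.mem_Ico] at hi
      rw [hag3 i (by omega) (by omega), hag3 (m.toNat - i) (by omega) (by omega)]
    have e4 : (∑ j ∈ Finset.Icc 1 m.toNat, (-1:ℂ)^(m.toNat - j) * ((m.toNat - j + 1 : ℕ) : ℂ) * f1 j)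
        = ∑ j ∈ Finset.Icc 1 m.toNat, (-1:ℂ)^(m.toNat - j) * ((m.toNat - j + 1 : ℕ) : ℂ) * h1 j := by
      refine Finset.sum_congr rfl fun j hj => ?_
      rw [Finset.mem_Icc] at hj
      rw [hag1 j (by omega) (by omega)]
    rw [e1, e2, e3, e4]
  · rfl

lemma Ccoef_top (hn : 2 ≤ n)
    (hag1 : ∀ j, 1 ≤ j → j ≤ n - 1 → f1 j = h1 j)
    (hag3 : ∀ j, 1 ≤ j → j ≤ n - 1 → f3 j = h3 j)
    (hz1 : h1 n = 0) (hz3 : h3 n = 0) (w mPhi : ℂ) :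
    Ccoef f1 f3 w mPhi (n:ℤ)
      = Ccoef h1 h3 w mPhi (n:ℤ)
        + Polynomial.C (-(2 * w * f3 n)) * Polynomial.X
        + Polynomial.C (-(f1 n)) * Polynomial.X ^ 2
        - Polynomial.C (mPhi ^ 2 * f1 n) := by
  unfold Ccoef
  rw [if_neg (show ¬((n:ℤ) = 0) by omega), if_pos (show (1:ℤ) ≤ (n:ℤ) by omega),
      if_neg (show ¬((n:ℤ) = 0) by omega), if_pos (show (1:ℤ) ≤ (n:ℤ) by omega)]
  have ht : ((n:ℤ)).toNat = n := by omega
  rw [ht]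
  have e3 : (∑ i ∈ Finset.Ico 1 n, f3 i * f3 (n - i))
      = ∑ i ∈ Finset.Ico 1 n, h3 i * h3 (n - i) := by
    refine Finset.sum_congr rfl fun i hi => ?_
    rw [Finset.mem_Ico] at hi
    rw [hag3 i (by omega) (by omega), hag3 (n - i) (by omega) (by omega)]
  have emass : (∑ j ∈ Finset.Icc 1 n, (-1:ℂ)^(n - j) * ((n - j + 1 : ℕ) : ℂ) * f1 j)
      = (∑ j ∈ Finset.Icc 1 n, (-1:ℂ)^(n - j) * ((n - j + 1 : ℕ) : ℂ) * h1 j) + f1 n := by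
    obtain ⟨m, rfl⟩ : ∃ m, n = m + 2 := ⟨n - 2, by omega⟩
    rw [Finset.sum_Icc_succ_top (by omega : 1 ≤ m + 1 + 1), Finset.sum_Icc_succ_top (by omega : 1 ≤ m + 1 + 1)]
    have hmid : (∑ j ∈ Finset.Icc 1 (m+1), (-1:ℂ)^(m + 2 - j) * ((m + 2 - j + 1 : ℕ) : ℂ) * f1 j)
        = ∑ j ∈ Finset.Icc 1 (m+1), (-1:ℂ)^(m + 2 - j) * ((m + 2 - j + 1 : ℕ) : ℂ) * h1 j := by
      refine Finset.sum_congr rfl fun j hj => ?_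
      rw [Finset.mem_Icc] at hj
      rw [hag1 j (by omega) (by omega)]
    have e0 : m + 2 - (m + 2) = 0 := by omega
    rw [hmid, e0, hz1]
    norm_num
  rw [e3, hz3, emass, hz1]
  simp only [map_zero, map_add, map_sub, map_neg, map_mul, mul_add, mul_zero, zero_mul,
    add_zero, neg_zero]
  ring

lemma key_cancel {n : ℕ} (hn : 2 ≤ n) (f1 f2 : ℕ → ℂ) :
    Acoef f1 f2 ((n:ℤ) + 2) * ((-(n:ℂ)/2 + ((1:ℕ):ℂ) - 1) * (-(n:ℂ)/2 + ((1:ℕ):ℂ) - 2))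
      + Bcoef f1 f2 ((n:ℤ) + 1) * (-(n:ℂ)/2 + ((1:ℕ):ℂ) - 1)
      = (n:ℂ)/2 * ∑ j ∈ Finset.Icc 2 (n+1), (-1:ℂ)^(n + 1 - j) * Acoef f1 f2 (j:ℤ) := by
  unfold Bcoef
  rw [if_pos (by omega : (1:ℤ) ≤ (n:ℤ)+1)]
  have ht : ((n:ℤ)+1).toNat = n + 1 := by omega
  rw [ht, show ((n:ℤ)+1+1) = ((n:ℤ)+2) by ring]
  push_cast
  ring

lemma Ment_agree {n : ℕ} {f1 f2 f3 h1 h2 h3 : ℕ → ℂ}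
    (hag1 : ∀ j, 1 ≤ j → j ≤ n - 1 → f1 j = h1 j)
    (hag2 : ∀ j, 1 ≤ j → j ≤ n - 1 → f2 j = h2 j)
    (hag3 : ∀ j, 1 ≤ j → j ≤ n - 1 → f3 j = h3 j)
    {K S : ℕ} (hKS : (K:ℤ) - S ≤ (n:ℤ) - 3) (w mPhi ρ : ℂ) :
    Ment f1 f2 f3 w mPhi ρ K S = Ment h1 h2 h3 w mPhi ρ K S := by
  unfold Ment
  rw [Acoef_agree hag1 hag2 (by omega), Bcoef_agree hag1 hag2 (by omega),
      Ccoef_agree hag1 hag3 (by omega) w mPhi]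

lemma Ment_shift {n : ℕ} (hn : 2 ≤ n) {f1 f2 f3 h1 h2 h3 : ℕ → ℂ}
    (hag1 : ∀ j, 1 ≤ j → j ≤ n - 1 → f1 j = h1 j)
    (hag2 : ∀ j, 1 ≤ j → j ≤ n - 1 → f2 j = h2 j)
    (hag3 : ∀ j, 1 ≤ j → j ≤ n - 1 → f3 j = h3 j)
    (hz1 : h1 n = 0) (hz2 : h2 n = 0)
    {K S : ℕ} (hKS : (K:ℤ) - S = (n:ℤ) - 2) (w mPhi ρ : ℂ) :
    Ment f1 f2 f3 w mPhi ρ K S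
      = Ment h1 h2 h3 w mPhi ρ K S
        + Polynomial.C ((f1 n * h2 1 + h1 1 * f2 n)
            * ((ρ + (S:ℂ) - 1) * (ρ + (S:ℂ) - 2) + ((n:ℂ)+1)/2 * (ρ + (S:ℂ) - 1))) := by
  unfold Ment
  rw [show (K:ℤ) - S + 3 = (n:ℤ) + 1 by omega, show (K:ℤ) - S + 2 = (n:ℤ) by omega,
      Acoef_top hn hag1 hag2 hz1 hz2, Bcoef_top hn hag1 hag2 hz1 hz2,
      Ccoef_agree hag1 hag3 (by omega : (K:ℤ) - S + 1 ≤ (n:ℤ) - 1) w mPhi]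
  simp only [map_add, map_mul, map_sub, map_one]
  ring

lemma Ment_corner {n : ℕ} (hn : 2 ≤ n) {f1 f2 f3 h1 h2 h3 : ℕ → ℂ}
    (hag1 : ∀ j, 1 ≤ j → j ≤ n - 1 → f1 j = h1 j)
    (hag2 : ∀ j, 1 ≤ j → j ≤ n - 1 → f2 j = h2 j)
    (hag3 : ∀ j, 1 ≤ j → j ≤ n - 1 → f3 j = h3 j)
    (hz1 : h1 n = 0) (hz2 : h2 n = 0) (hz3 : h3 n = 0) (w mPhi : ℂ) :
    Ment f1 f2 f3 w mPhi (-(n:ℂ)/2) n 1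
      = Ment h1 h2 h3 w mPhi (-(n:ℂ)/2) n 1
        + Polynomial.C ((n:ℂ)/2 * (f1 n * h2 1 + h1 1 * f2 n) - mPhi^2 * f1 n)
        + Polynomial.C (-(2 * w * f3 n)) * Polynomial.X
        + Polynomial.C (-(f1 n)) * Polynomial.X^2 := by
  unfold Ment
  rw [show ((n:ℕ):ℤ) - ((1:ℕ):ℤ) + 3 = (n:ℤ) + 2 by push_cast; ring,
      show ((n:ℕ):ℤ) - ((1:ℕ):ℤ) + 2 = (n:ℤ) + 1 by push_cast; ring,
      show ((n:ℕ):ℤ) - ((1:ℕ):ℤ) + 1 = (n:ℤ) by push_cast; ring]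
  rw [← map_add, ← map_add, key_cancel hn f1 f2, key_cancel hn h1 h2]
  have hsplit : ∀ F1 F2 : ℕ → ℂ,
      ∑ j ∈ Finset.Icc 2 (n+1), (-1:ℂ)^(n + 1 - j) * Acoef F1 F2 (j:ℤ)
        = (∑ j ∈ Finset.Icc 2 n, (-1:ℂ)^(n + 1 - j) * Acoef F1 F2 (j:ℤ))
          + Acoef F1 F2 ((n:ℤ)+1) := by
    intro F1 F2
    rw [Finset.sum_Icc_succ_top (by omega : 2 ≤ n + 1)]
    have e0 : n + 1 - (n + 1) = 0 := by omega
    rw [e0, pow_zero, one_mul]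
    norm_num
  rw [hsplit f1 f2, hsplit h1 h2]
  have hmid : (∑ j ∈ Finset.Icc 2 n, (-1:ℂ)^(n + 1 - j) * Acoef f1 f2 (j:ℤ))
      = ∑ j ∈ Finset.Icc 2 n, (-1:ℂ)^(n + 1 - j) * Acoef h1 h2 (j:ℤ) := by
    refine Finset.sum_congr rfl fun j hj => ?_
    rw [Finset.mem_Icc] at hj
    rw [Acoef_agree hag1 hag2 (show (j:ℤ) ≤ n by omega)]
  rw [hmid, Acoef_top hn hag1 hag2 hz1 hz2, Ccoef_top hn hag1 hag3 hz1 hz3 w mPhi]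
  simp only [map_add, map_mul, map_sub, map_neg, map_one]
  ring

/-- standard basis column vector -/
noncomputable def eCol (m k : ℕ) : Fin m → Polynomial ℂ := fun s => if s.1 = k then 1 else 0

lemma rot_det {n : ℕ} (A : Matrix (Fin n) (Fin n) (Polynomial ℂ)) (σ : Equiv.Perm (Fin n))
    (h : ∀ r s : Fin n, r < s → A (σ r) s = 0) :
    A.det = ∏ r, A (σ r) r ∨ A.det = -∏ r, A (σ r) r := by
  have hBT : (A.submatrix σ id).BlockTriangular OrderDual.toDual := by
    intro a b hab
    exact h a b (OrderDual.toDual_lt_toDual.mp hab)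
  have h2 : (A.submatrix σ id).det = ∏ r, (A (σ r) r) := by
    rw [Matrix.det_of_lowerTriangular _ hBT]
    rfl
  have h1 : (A.submatrix σ id).det = Equiv.Perm.sign σ * A.det := Matrix.det_permute σ A
  rcases Int.units_eq_one_or (Equiv.Perm.sign σ) with hs | hs <;> rw [hs] at h1
  · left; rw [← h2, h1]; simp
  · right
    simp only [Units.val_neg, Units.val_one, Int.cast_neg, Int.cast_one, neg_mul, one_mul] at h1
    rw [← h2, h1, neg_neg]

lemma Dj1_const (m : ℕ) (h1 h2 h3 : ℕ → ℂ) (w mPhi ρ : ℂ) :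
    ∃ d : ℂ, (Matrix.updateRow (Mmat h1 h2 h3 w mPhi (m+2) ρ)
        ⟨m+1, by omega⟩ (eCol (m+2) 0)).det = Polynomial.C d := by
  set A := Matrix.updateRow (Mmat h1 h2 h3 w mPhi (m+2) ρ) ⟨m+1, by omega⟩ (eCol (m+2) 0) with hA
  set t : Fin (m+2) := ⟨m+1, by omega⟩ with ht
  have htri : ∀ r s : Fin (m+2), r < s → A (t.cycleRange.symm r) s = 0 := by
    intro r s hrs
    induction r using Fin.cases with
    | zero =>
      rw [Fin.cycleRange_symm_zero, hA, Matrix.updateRow_self]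
      have : (s : ℕ) ≠ 0 := by
        have h' := hrs; rw [Fin.lt_def] at h'; simp at h'; omega
      simp [eCol, this]
    | succ r' =>
      rw [Fin.cycleRange_symm_succ,
        Fin.succAbove_of_castSucc_lt _ _ (by rw [Fin.lt_def]; simpa [ht] using r'.isLt)]
      rw [hA, Matrix.updateRow_ne (by rw [Ne, Fin.ext_iff]; simp [ht]; omega)]
      have hval : ((r'.succ : ℕ)) < (s : ℕ) := by rw [Fin.lt_def] at hrs; exact hrs
      simp only [Mmat]
      exact Ment_zero _ _ _ _ _ _ (by simp at hval ⊢; try omega)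
  have hdiag : ∀ r' : Fin (m+1), ∃ a : ℂ, A (t.cycleRange.symm r'.succ) r'.succ = Polynomial.C a := by
    intro r'
    rw [Fin.cycleRange_symm_succ,
      Fin.succAbove_of_castSucc_lt _ _ (by rw [Fin.lt_def]; simpa [ht] using r'.isLt)]
    rw [hA, Matrix.updateRow_ne (by rw [Ne, Fin.ext_iff]; simp [ht]; omega)]
    simp only [Mmat]
    exact Ment_const _ _ _ _ _ _ (by simp; try omega)
  choose a ha using hdiag
  have hPi : (∏ r, A (t.cycleRange.symm r) r) = Polynomial.C (∏ r', a r') := by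
    rw [Fin.prod_univ_succ]
    rw [Fin.cycleRange_symm_zero, hA, Matrix.updateRow_self]
    have h00 : eCol (m+2) 0 (0 : Fin (m+2)) = 1 := by simp [eCol]
    rw [h00, one_mul, map_prod]
    exact Finset.prod_congr rfl fun r' _ => ha r'
  rcases rot_det A t.cycleRange.symm htri with h | h
  · exact ⟨∏ r', a r', by rw [h, hPi]⟩
  · exact ⟨-∏ r', a r', by rw [h, hPi, map_neg]⟩

lemma degC_mul {a : ℂ} {q : Polynomial ℂ} (h : q.degree ≤ 2) :
    (Polynomial.C a * q).degree ≤ 2 := by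
  refine le_trans (Polynomial.degree_mul_le _ _) ?_
  calc Polynomial.degree (Polynomial.C a) + q.degree ≤ 0 + 2 :=
        add_le_add Polynomial.degree_C_le h
  _ = 2 := by norm_num

lemma deg2_mul_C {a : ℂ} {q : Polynomial ℂ} (h : q.degree ≤ 2) :
    (q * Polynomial.C a).degree ≤ 2 := by
  refine le_trans (Polynomial.degree_mul_le _ _) ?_
  calc q.degree + Polynomial.degree (Polynomial.C a) ≤ 2 + 0 :=
        add_le_add h Polynomial.degree_C_le
  _ = 2 := by norm_num

lemma Di_deg (m : ℕ) (h1 h2 h3 : ℕ → ℂ) (w mPhi ρ : ℂ) :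
    (Matrix.updateRow (Mmat h1 h2 h3 w mPhi (m+2) ρ)
        ⟨m, by omega⟩ (eCol (m+2) 0)).det.degree ≤ 2 := by
  set A := Matrix.updateRow (Mmat h1 h2 h3 w mPhi (m+2) ρ) ⟨m, by omega⟩ (eCol (m+2) 0) with hA
  set t : Fin (m+2) := ⟨m, by omega⟩ with ht
  have htri : ∀ r s : Fin (m+2), r < s → A (t.cycleRange.symm r) s = 0 := by
    intro r s hrs
    induction r using Fin.cases with
    | zero =>
      rw [Fin.cycleRange_symm_zero, hA, Matrix.updateRow_self]
      have : (s : ℕ) ≠ 0 := by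
        have h' := hrs; rw [Fin.lt_def] at h'; simp at h'; omega
      simp [eCol, this]
    | succ r' =>
      rw [Fin.cycleRange_symm_succ]
      by_cases hc : (r' : ℕ) < m
      · rw [Fin.succAbove_of_castSucc_lt _ _ (by rw [Fin.lt_def]; simpa [ht] using hc)]
        rw [hA, Matrix.updateRow_ne (by rw [Ne, Fin.ext_iff]; simp [ht]; omega)]
        have hval : ((r'.succ : ℕ)) < (s : ℕ) := by rw [Fin.lt_def] at hrs; exact hrs
        simp only [Mmat]
        exact Ment_zero _ _ _ _ _ _ (by simp at hval ⊢; try omega)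
      · exfalso
        have hr' : (r' : ℕ) = m := by have := r'.isLt; omega
        rw [Fin.lt_def] at hrs
        have := s.isLt
        simp [Fin.val_succ, hr'] at hrs
        omega
  have hdiagC : ∀ q : Fin m, ∃ a : ℂ,
      A (t.cycleRange.symm (q.castSucc).succ) (q.castSucc).succ = Polynomial.C a := by
    intro q
    rw [Fin.cycleRange_symm_succ,
      Fin.succAbove_of_castSucc_lt _ _ (by have hq := q.isLt; simp [Fin.lt_def, ht]; try omega)]
    rw [hA, Matrix.updateRow_ne (by have hq := q.isLt; rw [Ne, Fin.ext_iff]; simp [ht]; try omega)]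
    simp only [Mmat]
    exact Ment_const _ _ _ _ _ _ (by simp; try omega)
  choose a ha using hdiagC
  have hlast : A (t.cycleRange.symm (Fin.last m).succ) (Fin.last m).succ
      = Mmat h1 h2 h3 w mPhi (m+2) ρ ⟨m+1, by omega⟩ ⟨m+1, by omega⟩ := by
    rw [Fin.cycleRange_symm_succ,
      Fin.succAbove_of_le_castSucc _ _ (by simp [Fin.le_def, ht, Fin.last])]
    rw [hA, Matrix.updateRow_ne (by rw [Ne, Fin.ext_iff]; simp [ht, Fin.val_succ, Fin.last])]
    congr 1 <;> rw [Fin.ext_iff] <;> simp [Fin.val_succ, Fin.last]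
  have hPi : (∏ r, A (t.cycleRange.symm r) r)
      = Polynomial.C (∏ q, a q) * Mmat h1 h2 h3 w mPhi (m+2) ρ ⟨m+1, by omega⟩ ⟨m+1, by omega⟩ := by
    have hAt0 : A (t.cycleRange.symm 0) 0 = 1 := by
      rw [Fin.cycleRange_symm_zero, hA, Matrix.updateRow_self]; simp [eCol]
    rw [Fin.prod_univ_succ, hAt0, one_mul, Fin.prod_univ_castSucc, hlast, map_prod]
    congr 1
    exact Finset.prod_congr rfl fun q _ => ha q
  have hdeg2 : (Polynomial.C (∏ q, a q)
      * Mmat h1 h2 h3 w mPhi (m+2) ρ ⟨m+1, by omega⟩ ⟨m+1, by omega⟩).degree ≤ 2 := by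
    apply degC_mul
    simp only [Mmat]
    exact Ment_deg _ _ _ _ _ _ _ _
  rcases rot_det A t.cycleRange.symm htri with h | h
  · rw [h, hPi]; exact hdeg2
  · rw [h, Polynomial.degree_neg, hPi]; exact hdeg2

lemma Dj2_deg (m : ℕ) (h1 h2 h3 : ℕ → ℂ) (w mPhi ρ : ℂ) :
    (Matrix.updateRow (Mmat h1 h2 h3 w mPhi (m+2) ρ)
        ⟨m+1, by omega⟩ (eCol (m+2) 1)).det.degree ≤ 2 := by
  set A := Matrix.updateRow (Mmat h1 h2 h3 w mPhi (m+2) ρ) ⟨m+1, by omega⟩ (eCol (m+2) 1) with hA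
  set t : Fin (m+2) := ⟨m+1, by omega⟩ with ht
  set τ : Equiv.Perm (Fin (m+2)) := Equiv.swap 0 1 with hτ
  set B := A.submatrix id ⇑τ with hB
  have hO : (0 : Fin (m+2)) ≠ 1 := by
    rw [Ne, Fin.ext_iff]; simp
  have hsign : Equiv.Perm.sign τ = -1 := Equiv.Perm.sign_swap hO
  have hdetB : B.det = -A.det := by
    rw [hB, Matrix.det_permute' τ A, hsign]; simp
  have hBentry : ∀ r s, B r s = A r (τ s) := fun r s => rfl
  -- triangularity of the rotated B
  have htri : ∀ r s : Fin (m+2), r < s → B (t.cycleRange.symm r) s = 0 := by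
    intro r s hrs
    induction r using Fin.cases with
    | zero =>
      rw [Fin.cycleRange_symm_zero, hBentry, hA, Matrix.updateRow_self]
      have hs0 : s ≠ 0 := by
        intro hh; rw [hh] at hrs; exact absurd hrs (lt_irrefl _)
      have hτs : τ s ≠ 1 := by
        intro hh
        rw [hτ] at hh
        have : s = 0 := by
          have := (Equiv.swap 0 1).injective (hh.trans (Equiv.swap_apply_left 0 1).symm)
          exact this
        exact hs0 this
      have : (τ s : ℕ) ≠ 1 := fun hh => hτs (by rw [Fin.ext_iff]; simpa using hh)
      simp [eCol, this]
    | succ r' =>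
      rw [Fin.cycleRange_symm_succ,
        Fin.succAbove_of_castSucc_lt _ _ (by rw [Fin.lt_def]; simpa [ht] using r'.isLt)]
      have hval : ((r'.succ : ℕ)) < (s : ℕ) := by rw [Fin.lt_def] at hrs; exact hrs
      have hs2 : 2 ≤ (s : ℕ) := by simp [Fin.val_succ] at hval; omega
      have hτs : τ s = s := by
        rw [hτ]
        refine Equiv.swap_apply_of_ne_of_ne ?_ ?_ <;>
          (intro hh; rw [hh] at hs2; simp at hs2)
      rw [hBentry, hτs, hA, Matrix.updateRow_ne (by rw [Ne, Fin.ext_iff]; simp [ht]; omega)]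
      simp only [Mmat]
      exact Ment_zero _ _ _ _ _ _ (by simp [Fin.val_succ] at hval ⊢; try omega)
  -- diagonal entries
  have h0 : B (t.cycleRange.symm 0) 0 = 1 := by
    rw [Fin.cycleRange_symm_zero, hBentry, hA, Matrix.updateRow_self, hτ,
      Equiv.swap_apply_left]
    simp [eCol]
  have h1' : B (t.cycleRange.symm (0 : Fin (m+1)).succ) (0 : Fin (m+1)).succ
      = Mmat h1 h2 h3 w mPhi (m+2) ρ ⟨0, by omega⟩ ⟨0, by omega⟩ := by
    rw [Fin.cycleRange_symm_succ,
      Fin.succAbove_of_castSucc_lt _ _ (by rw [Fin.lt_def]; simp [ht])]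
    have hsucc0 : ((0 : Fin (m+1)).succ : Fin (m+2)) = 1 := by rw [Fin.ext_iff]; simp
    rw [hBentry, hsucc0, hτ, Equiv.swap_apply_right, hA,
      Matrix.updateRow_ne (by rw [Ne, Fin.ext_iff]; simp [ht])]
    congr 1 <;> (rw [Fin.ext_iff]; simp)
  have hdiagC : ∀ q : Fin m, ∃ a : ℂ,
      B (t.cycleRange.symm (q.succ).succ) (q.succ).succ = Polynomial.C a := by
    intro q
    rw [Fin.cycleRange_symm_succ,
      Fin.succAbove_of_castSucc_lt _ _ (by have hq := q.isLt; simp [Fin.lt_def, ht]; try omega)]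
    have hτs : τ ((q.succ).succ) = (q.succ).succ := by
      rw [hτ]
      refine Equiv.swap_apply_of_ne_of_ne ?_ ?_ <;>
        (rw [Ne, Fin.ext_iff]; simp [Fin.val_succ])
    rw [hBentry, hτs, hA,
      Matrix.updateRow_ne (by have hq := q.isLt; rw [Ne, Fin.ext_iff]; simp [ht, Fin.val_succ]; omega)]
    simp only [Mmat]
    exact Ment_const _ _ _ _ _ _ (by simp [Fin.val_succ]; try omega)
  choose a ha using hdiagC
  have hPi : (∏ r, B (t.cycleRange.symm r) r)
      = Mmat h1 h2 h3 w mPhi (m+2) ρ ⟨0, by omega⟩ ⟨0, by omega⟩ * Polynomial.C (∏ q, a q) := by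
    rw [Fin.prod_univ_succ, h0, one_mul, Fin.prod_univ_succ, h1', map_prod]
    congr 1
    exact Finset.prod_congr rfl fun q _ => ha q
  have hdegPi : (∏ r, B (t.cycleRange.symm r) r).degree ≤ 2 := by
    rw [hPi]
    apply deg2_mul_C
    simp only [Mmat]
    exact Ment_deg _ _ _ _ _ _ _ _
  have hdegB : B.det.degree ≤ 2 := by
    rcases rot_det B t.cycleRange.symm htri with h | h
    · rw [h]; exact hdegPi
    · rw [h, Polynomial.degree_neg]; exact hdegPi
  have : A.det = -B.det := by rw [hdetB, neg_neg]
  rw [this, Polynomial.degree_neg]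
  exact hdegB

lemma updateRow_comm {n : ℕ} (M : Matrix (Fin n) (Fin n) (Polynomial ℂ)) {i j : Fin n}
    (hij : i ≠ j) (v u : Fin n → Polynomial ℂ) :
    Matrix.updateRow (Matrix.updateRow M i v) j u
      = Matrix.updateRow (Matrix.updateRow M j u) i v := by
  funext K S
  by_cases h1 : K = j <;> by_cases h2 : K = i
  · exact absurd (h2.symm.trans h1) hij
  all_goals simp [Matrix.updateRow_apply, h1, h2, hij, Ne.symm hij]


/-- at `ρ = -n/2`, `det 𝓜⁽ⁿ⁾(-n/2)` is an affine function of
`(f_{1,n}, f_{2,n}, f_{3,n})`, independent of `f_{a,n+1}`, with `f_{3,n}` appearing only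
in the `k¹` coefficient and `f_{1,n}, f_{2,n}` only in the `k⁰, k¹, k²` coefficients. -/
theorem det_M_affine_in_top_metric_derivatives
    (n : ℕ) (hn : 2 ≤ n) (w mPhi : ℂ) (g1 g2 g3 : ℕ → ℂ) :
    ∃ (P0 P1 P2 : Polynomial ℂ) (c : ℂ),
      P1.degree ≤ 2 ∧ P2.degree ≤ 2 ∧
      ∀ f1 f2 f3 : ℕ → ℂ,
        (∀ j : ℕ, 1 ≤ j → j ≤ n - 1 → f1 j = g1 j ∧ f2 j = g2 j ∧ f3 j = g3 j) →
        (Mmat f1 f2 f3 w mPhi n (-(n : ℂ) / 2)).det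
          = Polynomial.C (f1 n) * P1 + Polynomial.C (f2 n) * P2
              + Polynomial.C (c * f3 n) * Polynomial.X + P0 := by
  obtain ⟨m, rfl⟩ : ∃ m, n = m + 2 := ⟨n - 2, by omega⟩
  clear hn
  classical
  have him : m < m + 2 := by omega
  have hjm : m + 1 < m + 2 := by omega
  have h02 : 0 < m + 2 := by omega
  have h12 : 1 < m + 2 := by omega
  set H1 : ℕ → ℂ := fun j => if j ≤ m + 1 then g1 j else 0 with hH1
  set H2 : ℕ → ℂ := fun j => if j ≤ m + 1 then g2 j else 0 with hH2
  set H3 : ℕ → ℂ := fun j => if j ≤ m + 1 then g3 j else 0 with hH3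
  have hz1 : H1 (m+2) = 0 := by simp [hH1]
  have hz2 : H2 (m+2) = 0 := by simp [hH2]
  have hz3 : H3 (m+2) = 0 := by simp [hH3]
  clear_value H1 H2 H3
  set NN := Mmat H1 H2 H3 w mPhi (m+2) (-(↑(m+2):ℂ)/2) with hNN
  set DiD := (Matrix.updateRow NN ⟨m, him⟩ (eCol (m+2) 0)).det with hDiD
  set Dj2D := (Matrix.updateRow NN ⟨m+1, hjm⟩ (eCol (m+2) 1)).det with hDj2D
  set ZD := (Matrix.updateRow (Matrix.updateRow NN ⟨m+1, hjm⟩ (eCol (m+2) 1))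
      ⟨m, him⟩ (eCol (m+2) 0)).det with hZD
  have hDideg : DiD.degree ≤ 2 := by
    rw [hDiD, hNN]; exact Di_deg m H1 H2 H3 w mPhi _
  have hDj2deg : Dj2D.degree ≤ 2 := by
    rw [hDj2D, hNN]; exact Dj2_deg m H1 H2 H3 w mPhi _
  obtain ⟨d1, hd1⟩ : ∃ d : ℂ,
      (Matrix.updateRow NN ⟨m+1, hjm⟩ (eCol (m+2) 0)).det = Polynomial.C d := by
    rw [hNN]; exact Dj1_const m H1 H2 H3 w mPhi _
  clear_value NN DiD Dj2D ZD
  set γ1 : ℂ := ((-(↑(m+2):ℂ)/2) + ((1:ℕ):ℂ) - 1) * ((-(↑(m+2):ℂ)/2) + ((1:ℕ):ℂ) - 2)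
      + ((↑(m+2):ℂ)+1)/2 * ((-(↑(m+2):ℂ)/2) + ((1:ℕ):ℂ) - 1) with hγ1
  set γ2 : ℂ := ((-(↑(m+2):ℂ)/2) + ((2:ℕ):ℂ) - 1) * ((-(↑(m+2):ℂ)/2) + ((2:ℕ):ℂ) - 2)
      + ((↑(m+2):ℂ)+1)/2 * ((-(↑(m+2):ℂ)/2) + ((2:ℕ):ℂ) - 1) with hγ2
  clear_value γ1 γ2
  refine ⟨NN.det,
    Polynomial.C (H2 1 * γ1) * DiD
      + (Polynomial.C ((↑(m+2):ℂ)/2 * H2 1 - mPhi^2) - Polynomial.X^2) * Polynomial.C d1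
      + Polynomial.C (H2 1 * γ2) * Dj2D,
    Polynomial.C (H1 1 * γ1) * DiD
      + Polynomial.C ((↑(m+2):ℂ)/2 * H1 1) * Polynomial.C d1
      + Polynomial.C (H1 1 * γ2) * Dj2D,
    -(2*w*d1), ?_, ?_, ?_⟩
  · refine le_trans (Polynomial.degree_add_le _ _)
      (max_le (le_trans (Polynomial.degree_add_le _ _) (max_le ?_ ?_)) ?_)
    · exact degC_mul hDideg
    · apply deg2_mul_C
      refine le_trans (Polynomial.degree_sub_le _ _)
        (max_le (le_trans Polynomial.degree_C_le (by norm_num)) (Polynomial.degree_X_pow_le 2))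
    · exact degC_mul hDj2deg
  · refine le_trans (Polynomial.degree_add_le _ _)
      (max_le (le_trans (Polynomial.degree_add_le _ _) (max_le ?_ ?_)) ?_)
    · exact degC_mul hDideg
    · apply deg2_mul_C
      exact le_trans Polynomial.degree_C_le (by norm_num)
    · exact degC_mul hDj2deg
  intro f1 f2 f3 hf
  have hag1 : ∀ j, 1 ≤ j → j ≤ m + 2 - 1 → f1 j = H1 j := by
    intro j hj1 hj2
    simp only [hH1]
    rw [if_pos (show j ≤ m+1 by omega)]
    exact (hf j hj1 hj2).1
  have hag2 : ∀ j, 1 ≤ j → j ≤ m + 2 - 1 → f2 j = H2 j := by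
    intro j hj1 hj2
    simp only [hH2]
    rw [if_pos (show j ≤ m+1 by omega)]
    exact (hf j hj1 hj2).2.1
  have hag3 : ∀ j, 1 ≤ j → j ≤ m + 2 - 1 → f3 j = H3 j := by
    intro j hj1 hj2
    simp only [hH3]
    rw [if_pos (show j ≤ m+1 by omega)]
    exact (hf j hj1 hj2).2.2
  set u := f1 (m+2) * H2 1 + H1 1 * f2 (m+2) with hu
  set pP := Polynomial.C ((↑(m+2):ℂ)/2 * u - mPhi^2 * f1 (m+2))
      + Polynomial.C (-(2*w*f3 (m+2))) * Polynomial.X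
      + Polynomial.C (-(f1 (m+2))) * Polynomial.X^2 with hpP
  clear_value u pP
  have hij : (⟨m, him⟩ : Fin (m+2)) ≠ ⟨m+1, hjm⟩ := by rw [Ne, Fin.ext_iff]; simp
  -- the matrix decomposition
  have hMdec : Mmat f1 f2 f3 w mPhi (m+2) (-(↑(m+2):ℂ)/2)
      = Matrix.updateRow (Matrix.updateRow NN ⟨m, him⟩
          (fun s => NN ⟨m, him⟩ s + Polynomial.C (u * γ1) * eCol (m+2) 0 s))
          ⟨m+1, hjm⟩
          (fun s => NN ⟨m+1, hjm⟩ s + pP * eCol (m+2) 0 s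
            + Polynomial.C (u * γ2) * eCol (m+2) 1 s) := by
    funext K S
    by_cases hKj : K = (⟨m+1, hjm⟩ : Fin (m+2))
    · rw [hKj, Matrix.updateRow_self]
      by_cases hS0 : (S : ℕ) = 0
      · rw [show S = (⟨0, h02⟩ : Fin (m+2)) from Fin.ext hS0, hNN]
        show Ment f1 f2 f3 w mPhi (-(↑(m+2):ℂ)/2) (m+2) 1
          = Ment H1 H2 H3 w mPhi (-(↑(m+2):ℂ)/2) (m+2) 1 + pP * 1
            + Polynomial.C (u * γ2) * 0
        rw [Ment_corner (show 2 ≤ m+2 by omega) hag1 hag2 hag3 hz1 hz2 hz3 w mPhi, hpP, hu]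
        ring
      · by_cases hS1 : (S : ℕ) = 1
        · rw [show S = (⟨1, h12⟩ : Fin (m+2)) from Fin.ext hS1, hNN]
          show Ment f1 f2 f3 w mPhi (-(↑(m+2):ℂ)/2) (m+2) 2
            = Ment H1 H2 H3 w mPhi (-(↑(m+2):ℂ)/2) (m+2) 2 + pP * 0
              + Polynomial.C (u * γ2) * 1
          rw [Ment_shift (show 2 ≤ m+2 by omega) hag1 hag2 hag3 hz1 hz2
            (by omega : ((m+2:ℕ):ℤ) - ((2:ℕ):ℤ) = ((m+2:ℕ):ℤ) - 2) w mPhi (-(↑(m+2):ℂ)/2),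
            hu, hγ2]
          ring
        · change _ = NN ⟨m+1, hjm⟩ S + pP * eCol (m+2) 0 S
            + Polynomial.C (u * γ2) * eCol (m+2) 1 S
          rw [show eCol (m+2) 0 S = 0 by simp [eCol, hS0],
              show eCol (m+2) 1 S = 0 by simp [eCol, hS1],
              mul_zero, mul_zero, add_zero, add_zero, hNN]
          show Ment f1 f2 f3 w mPhi (-(↑(m+2):ℂ)/2) (m+2) ((S:ℕ)+1)
            = Ment H1 H2 H3 w mPhi (-(↑(m+2):ℂ)/2) (m+2) ((S:ℕ)+1)
          exact Ment_agree hag1 hag2 hag3 (by omega) w mPhi _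
    · rw [Matrix.updateRow_ne hKj]
      by_cases hKi : K = (⟨m, him⟩ : Fin (m+2))
      · rw [hKi, Matrix.updateRow_self]
        by_cases hS0 : (S : ℕ) = 0
        · rw [show S = (⟨0, h02⟩ : Fin (m+2)) from Fin.ext hS0, hNN]
          show Ment f1 f2 f3 w mPhi (-(↑(m+2):ℂ)/2) (m+1) 1
            = Ment H1 H2 H3 w mPhi (-(↑(m+2):ℂ)/2) (m+1) 1 + Polynomial.C (u * γ1) * 1
          rw [Ment_shift (show 2 ≤ m+2 by omega) hag1 hag2 hag3 hz1 hz2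
            (by omega : ((m+1:ℕ):ℤ) - ((1:ℕ):ℤ) = ((m+2:ℕ):ℤ) - 2) w mPhi (-(↑(m+2):ℂ)/2),
            hu, hγ1]
          ring
        · change _ = NN ⟨m, him⟩ S + Polynomial.C (u * γ1) * eCol (m+2) 0 S
          rw [show eCol (m+2) 0 S = 0 by simp [eCol, hS0], mul_zero, add_zero, hNN]
          show Ment f1 f2 f3 w mPhi (-(↑(m+2):ℂ)/2) (m+1) ((S:ℕ)+1)
            = Ment H1 H2 H3 w mPhi (-(↑(m+2):ℂ)/2) (m+1) ((S:ℕ)+1)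
          exact Ment_agree hag1 hag2 hag3 (by omega) w mPhi _
      · rw [Matrix.updateRow_ne hKi, hNN]
        have hKm : (K : ℕ) ≠ m := fun h => hKi (Fin.ext h)
        have hKm1 : (K : ℕ) ≠ m + 1 := fun h => hKj (Fin.ext h)
        have hKlt := K.isLt
        show Ment f1 f2 f3 w mPhi (-(↑(m+2):ℂ)/2) ((K:ℕ)+1) ((S:ℕ)+1)
          = Ment H1 H2 H3 w mPhi (-(↑(m+2):ℂ)/2) ((K:ℕ)+1) ((S:ℕ)+1)
        exact Ment_agree hag1 hag2 hag3 (by omega) w mPhi _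
  -- now compute the determinant
  rw [hMdec]
  have hri : (fun s => NN ⟨m, him⟩ s + Polynomial.C (u * γ1) * eCol (m+2) 0 s)
      = NN ⟨m, him⟩ + Polynomial.C (u * γ1) • eCol (m+2) 0 := by
    funext s; simp [Pi.add_apply, Pi.smul_apply, smul_eq_mul]
  have hrj : (fun s => NN ⟨m+1, hjm⟩ s + pP * eCol (m+2) 0 s
        + Polynomial.C (u * γ2) * eCol (m+2) 1 s)
      = NN ⟨m+1, hjm⟩ + (pP • eCol (m+2) 0 + Polynomial.C (u * γ2) • eCol (m+2) 1) := by
    funext s; simp [Pi.add_apply, Pi.smul_apply, smul_eq_mul]; ring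
  rw [hri, hrj]
  set W1 := Matrix.updateRow NN ⟨m, him⟩
      (NN ⟨m, him⟩ + Polynomial.C (u * γ1) • eCol (m+2) 0) with hW1
  clear_value W1
  have hW1j : NN ⟨m+1, hjm⟩ = W1 ⟨m+1, hjm⟩ := by
    rw [hW1, Matrix.updateRow_ne (Ne.symm hij)]
  have step1 : (Matrix.updateRow W1 ⟨m+1, hjm⟩
      (NN ⟨m+1, hjm⟩ + (pP • eCol (m+2) 0 + Polynomial.C (u * γ2) • eCol (m+2) 1))).det
      = W1.det + (pP * (Matrix.updateRow W1 ⟨m+1, hjm⟩ (eCol (m+2) 0)).det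
        + Polynomial.C (u * γ2) * (Matrix.updateRow W1 ⟨m+1, hjm⟩ (eCol (m+2) 1)).det) := by
    rw [hW1j, Matrix.det_updateRow_add, Matrix.updateRow_eq_self,
      Matrix.det_updateRow_add, Matrix.det_updateRow_smul, Matrix.det_updateRow_smul]
  have step2 : W1.det = NN.det + Polynomial.C (u * γ1) * DiD := by
    rw [hW1, Matrix.det_updateRow_add, Matrix.updateRow_eq_self, Matrix.det_updateRow_smul,
      hDiD]
  have step3 : (Matrix.updateRow W1 ⟨m+1, hjm⟩ (eCol (m+2) 0)).det = Polynomial.C d1 := by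
    rw [hW1, updateRow_comm NN hij]
    rw [show NN ⟨m, him⟩ = (Matrix.updateRow NN ⟨m+1, hjm⟩ (eCol (m+2) 0)) ⟨m, him⟩
        from (Matrix.updateRow_ne hij).symm]
    rw [Matrix.det_updateRow_add, Matrix.updateRow_eq_self, Matrix.det_updateRow_smul]
    have hzz : (Matrix.updateRow (Matrix.updateRow NN ⟨m+1, hjm⟩ (eCol (m+2) 0))
        ⟨m, him⟩ (eCol (m+2) 0)).det = 0 := by
      apply Matrix.det_zero_of_row_eq hij
      rw [Matrix.updateRow_self, Matrix.updateRow_ne (Ne.symm hij), Matrix.updateRow_self]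
    rw [hzz, mul_zero, add_zero, hd1]
  have step4 : (Matrix.updateRow W1 ⟨m+1, hjm⟩ (eCol (m+2) 1)).det
      = Dj2D + Polynomial.C (u * γ1) * ZD := by
    rw [hW1, updateRow_comm NN hij]
    rw [show NN ⟨m, him⟩ = (Matrix.updateRow NN ⟨m+1, hjm⟩ (eCol (m+2) 1)) ⟨m, him⟩
        from (Matrix.updateRow_ne hij).symm]
    rw [Matrix.det_updateRow_add, Matrix.updateRow_eq_self, Matrix.det_updateRow_smul,
      hDj2D, hZD]
  have hKill : Polynomial.C (u * γ2) * ZD = 0 := by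
    rcases Nat.eq_zero_or_pos m with hm0 | hm1
    · have hγ20 : γ2 = 0 := by
        rw [hγ2]; subst hm0; norm_num
      rw [hγ20, mul_zero, map_zero, zero_mul]
    · have hZ0 : ZD = 0 := by
        rw [hZD]
        have hi0 : (⟨0, h02⟩ : Fin (m+2)) ≠ ⟨m, him⟩ := by
          rw [Ne, Fin.ext_iff]; simp; omega
        have hj0 : (⟨0, h02⟩ : Fin (m+2)) ≠ ⟨m+1, hjm⟩ := by
          rw [Ne, Fin.ext_iff]; simp
        set V := Matrix.updateRow (Matrix.updateRow NN ⟨m+1, hjm⟩ (eCol (m+2) 1))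
            ⟨m, him⟩ (eCol (m+2) 0) with hV
        have hVi : V ⟨m, him⟩ = eCol (m+2) 0 := Matrix.updateRow_self
        have hVj : V ⟨m+1, hjm⟩ = eCol (m+2) 1 := by
          rw [hV, Matrix.updateRow_ne (Ne.symm hij), Matrix.updateRow_self]
        have hV0 : V ⟨0, h02⟩ = NN ⟨0, h02⟩ := by
          rw [hV, Matrix.updateRow_ne hi0, Matrix.updateRow_ne hj0]
        have hVrow : V ⟨0, h02⟩ = NN ⟨0, h02⟩ ⟨0, h02⟩ • V ⟨m, him⟩
            + NN ⟨0, h02⟩ ⟨1, h12⟩ • V ⟨m+1, hjm⟩ := by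
          rw [hV0, hVi, hVj]
          funext s
          simp only [Pi.add_apply, Pi.smul_apply, smul_eq_mul, eCol]
          by_cases hs0 : (s : ℕ) = 0
          · rw [show s = (⟨0, h02⟩ : Fin (m+2)) from Fin.ext hs0]
            norm_num
          · by_cases hs1 : (s : ℕ) = 1
            · rw [show s = (⟨1, h12⟩ : Fin (m+2)) from Fin.ext hs1]
              norm_num
            · rw [if_neg hs0, if_neg hs1, mul_zero, mul_zero, add_zero, hNN]
              show Ment H1 H2 H3 w mPhi (-(↑(m+2):ℂ)/2) 1 ((s:ℕ)+1) = 0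
              exact Ment_zero _ _ _ _ _ _ (by omega)
        have h5 : V.det = (Matrix.updateRow V ⟨0, h02⟩ (V ⟨0, h02⟩)).det := by
          rw [Matrix.updateRow_eq_self]
        rw [h5, hVrow, Matrix.det_updateRow_add, Matrix.det_updateRow_smul,
          Matrix.det_updateRow_smul]
        have hz1' : (Matrix.updateRow V ⟨0, h02⟩ (V ⟨m, him⟩)).det = 0 := by
          apply Matrix.det_zero_of_row_eq hi0
          rw [Matrix.updateRow_self, Matrix.updateRow_ne (Ne.symm hi0)]
        have hz2' : (Matrix.updateRow V ⟨0, h02⟩ (V ⟨m+1, hjm⟩)).det = 0 := by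
          apply Matrix.det_zero_of_row_eq hj0
          rw [Matrix.updateRow_self, Matrix.updateRow_ne (Ne.symm hj0)]
        rw [hz1', hz2', mul_zero, mul_zero, add_zero]
      rw [hZ0, mul_zero]
  rw [step1, step2, step3, step4]
  have hcollapse : Polynomial.C (u * γ2) * (Dj2D + Polynomial.C (u * γ1) * ZD)
      = Polynomial.C (u * γ2) * Dj2D := by
    rw [mul_add, show Polynomial.C (u * γ2) * (Polynomial.C (u * γ1) * ZD)
      = Polynomial.C (u * γ1) * (Polynomial.C (u * γ2) * ZD) by ring, hKill, mul_zero, add_zero]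
  rw [hcollapse, hpP, hu]
  simp only [map_add, map_mul, map_sub, map_neg, map_pow, map_one]
  ring
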